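/- In a group-cograded weak Hopf quasigroup H over a group G, for all p ∈ G one has ε_p^t = ε̃_p^s ∘ S_{p⁻¹} = S_{p⁻¹} ∘ ε̃_{p⁻¹}^t and ε_p^s = ε̃_p^t ∘ S_{p⁻¹} = S_{p⁻¹} ∘ ε̃_{p⁻¹}^s as maps H_e → H_p (precomposing with S_e : H_e → H_e where appropriate). -/

import Mathlib

noncomputable section

open TensorProduct

namespace WHQPaper

variable (k : Type*) [Field k]

/-- `(a ⊗ b) ↦ f a * g b` into the scalars. -/
def sc2 {M N : Type*} [AddCommGroup M] [Module k M] [AddCommGroup N] [Module k N]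
    (f : M →ₗ[k] k) (g : N →ₗ[k] k) : M ⊗[k] N →ₗ[k] k :=
  (LinearMap.mul' k k).comp (TensorProduct.map f g)

/-- `(a ⊗ b) ↦ f a • g b`. -/
def sm2 {M N P : Type*} [AddCommGroup M] [Module k M] [AddCommGroup N] [Module k N]
    [AddCommGroup P] [Module k P] (f : M →ₗ[k] k) (g : N →ₗ[k] P) : M ⊗[k] N →ₗ[k] P :=
  TensorProduct.lift ((LinearMap.lsmul k P).compl₁₂ f g)

/-- `(a ⊗ b) ↦ m (f a) (g b)`. -/
def mu2 {M N A B C : Type*} [AddCommGroup M] [Module k M] [AddCommGroup N] [Module k N]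
    [AddCommGroup A] [Module k A] [AddCommGroup B] [Module k B] [AddCommGroup C] [Module k C]
    (m : A →ₗ[k] B →ₗ[k] C) (f : M →ₗ[k] A) (g : N →ₗ[k] B) : M ⊗[k] N →ₗ[k] C :=
  TensorProduct.lift (m.compl₁₂ f g)

/-- the bilinear map `(a ⊗ b) ↦ (c ⊗ d) ↦ (f a c) ⊗ (g b d)`. -/
def pair2 {A B C D E₁ E₂ : Type*} [AddCommGroup A] [Module k A] [AddCommGroup B] [Module k B]
    [AddCommGroup C] [Module k C] [AddCommGroup D] [Module k D]
    [AddCommGroup E₁] [Module k E₁] [AddCommGroup E₂] [Module k E₂]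
    (f : A →ₗ[k] C →ₗ[k] E₁) (g : B →ₗ[k] D →ₗ[k] E₂) :
    (A ⊗[k] B) →ₗ[k] (C ⊗[k] D) →ₗ[k] (E₁ ⊗[k] E₂) :=
  TensorProduct.lift ((TensorProduct.mapBilinear (RingHom.id k) C D E₁ E₂).compl₁₂ f g)

variable {G : Type*} [Group G]

/-- transport along an equality of indices. -/
def castH (H : G → Type*) [∀ p, AddCommGroup (H p)] [∀ p, Module k (H p)]
    {p q : G} (e : p = q) : H p →ₗ[k] H q where
  toFun x := e ▸ x
  map_add' := by subst e; intros; rfl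
  map_smul' := by subst e; intros; rfl

variable (G)

/-- A group-cograded weak Hopf quasigroup: a family of (not necessarily associative)
unital algebras `(H_p)_{p ∈ G}`, comultiplications `Δ_{p,q} : H_{pq} → H_p ⊗ H_q` which are
coassociative algebra maps, a counit `ε : H_e → k` and an antipode
`S = (S_p : H_p → H_{p⁻¹})`, subject to the axioms of Definition 3.1, together with the
four (co)unital maps `ε^t_p, ε^s_p, ε̃^t_p, ε̃^s_p : H_e → H_p` given by their defining
formulas. -/
structure GCWHQ (H : G → Type*) [∀ p, AddCommGroup (H p)] [∀ p, Module k (H p)] where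
  mul : ∀ p, H p →ₗ[k] H p →ₗ[k] H p
  one : ∀ p, H p
  comul : ∀ p q, H (p * q) →ₗ[k] H p ⊗[k] H q
  counit : H 1 →ₗ[k] k
  antS : ∀ p, H p →ₗ[k] H p⁻¹
  εt : ∀ p, H 1 →ₗ[k] H p
  εs : ∀ p, H 1 →ₗ[k] H p
  εt' : ∀ p, H 1 →ₗ[k] H p
  εs' : ∀ p, H 1 →ₗ[k] H p
  one_mul' : ∀ p (h : H p), mul p (one p) h = h
  mul_one' : ∀ p (h : H p), mul p h (one p) = h
  /-- each `Δ_{p,q}` is multiplicative -/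
  comul_mul : ∀ p q (h g : H (p * q)),
    comul p q (mul (p * q) h g) = pair2 k (mul p) (mul q) (comul p q h) (comul p q g)
  coassoc : ∀ p q r (h : H (p * q * r)),
    (TensorProduct.assoc k (H p) (H q) (H r))
        ((TensorProduct.map (comul p q) LinearMap.id) (comul (p * q) r h))
      = (TensorProduct.map LinearMap.id (comul q r))
          (comul p (q * r) (castH k H (mul_assoc p q r) h))
  counit_left : ∀ p (h : H p),
    (TensorProduct.lid k (H p)) ((TensorProduct.map counit LinearMap.id)
      (comul 1 p (castH k H (one_mul p).symm h))) = h
  counit_right : ∀ p (h : H p),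
    (TensorProduct.rid k (H p)) ((TensorProduct.map LinearMap.id counit)
      (comul p 1 (castH k H (mul_one p).symm h))) = h
  eps_assoc : ∀ g h l : H 1, counit (mul 1 (mul 1 g h) l) = counit (mul 1 g (mul 1 h l))
  /-- `ε(ghl) = ε(gh₁)ε(h₂l)` -/
  eps_weak₁ : ∀ g h l : H 1, counit (mul 1 (mul 1 g h) l)
    = sc2 k (counit ∘ₗ mul 1 g) (counit ∘ₗ (mul 1).flip l)
        (comul 1 1 (castH k H (one_mul (1 : G)).symm h))
  /-- `ε(ghl) = ε(gh₂)ε(h₁l)` -/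
  eps_weak₂ : ∀ g h l : H 1, counit (mul 1 (mul 1 g h) l)
    = sc2 k (counit ∘ₗ (mul 1).flip l) (counit ∘ₗ mul 1 g)
        (comul 1 1 (castH k H (one_mul (1 : G)).symm h))
  /-- (3.1): `(Δ_{p,q} ⊗ id)Δ_{pq,r}(1) = (Δ_{p,q}(1) ⊗ 1_r)(1_p ⊗ Δ_{q,r}(1))` -/
  unit_weak₁ : ∀ p q r, (TensorProduct.map (comul p q) LinearMap.id)
      (comul (p * q) r (one (p * q * r)))
    = pair2 k (pair2 k (mul p) (mul q)) (mul r)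
        ((comul p q (one (p * q))) ⊗ₜ[k] (one r))
        ((TensorProduct.assoc k (H p) (H q) (H r)).symm
          ((one p) ⊗ₜ[k] (comul q r (one (q * r)))))
  /-- (3.2): `(Δ_{p,q} ⊗ id)Δ_{pq,r}(1) = (1_p ⊗ Δ_{q,r}(1))(Δ_{p,q}(1) ⊗ 1_r)` -/
  unit_weak₂ : ∀ p q r, (TensorProduct.map (comul p q) LinearMap.id)
      (comul (p * q) r (one (p * q * r)))
    = pair2 k (pair2 k (mul p) (mul q)) (mul r)
        ((TensorProduct.assoc k (H p) (H q) (H r)).symm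
          ((one p) ⊗ₜ[k] (comul q r (one (q * r)))))
        ((comul p q (one (p * q))) ⊗ₜ[k] (one r))
  /-- (3.4): `ε^t_p(h) = ε(1_{(1,e)}h) 1_{(2,p)}` -/
  εt_def : ∀ p (h : H 1), εt p h
    = sm2 k (counit ∘ₗ (mul 1).flip h) LinearMap.id (comul 1 p (one (1 * p)))
  /-- (3.5): `ε^s_p(h) = 1_{(1,p)} ε(h1_{(2,e)})` -/
  εs_def : ∀ p (h : H 1), εs p h
    = sm2 k (counit ∘ₗ mul 1 h) LinearMap.id
        ((TensorProduct.comm k (H p) (H 1)) (comul p 1 (one (p * 1))))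
  /-- (3.11): `ε̃^t_p(h) = 1_{(1,p)} ε(1_{(2,e)}h)` -/
  εt'_def : ∀ p (h : H 1), εt' p h
    = sm2 k (counit ∘ₗ (mul 1).flip h) LinearMap.id
        ((TensorProduct.comm k (H p) (H 1)) (comul p 1 (one (p * 1))))
  /-- (3.12): `ε̃^s_p(h) = ε(h1_{(1,e)}) 1_{(2,p)}` -/
  εs'_def : ∀ p (h : H 1), εs' p h
    = sm2 k (counit ∘ₗ mul 1 h) LinearMap.id (comul 1 p (one (1 * p)))
  /-- (3.6): `S = S * ε_t` -/
  S_conv_εt : ∀ p (h : H p),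
    mu2 k (mul p⁻¹) (antS p) (εt p⁻¹) (comul p 1 (castH k H (mul_one p).symm h)) = antS p h
  /-- (3.6): `S = ε_s * S` -/
  εs_conv_S : ∀ p (h : H p),
    mu2 k (mul p⁻¹) (εs p⁻¹) (antS p) (comul 1 p (castH k H (one_mul p).symm h)) = antS p h
  /-- (3.7): `S(h_{(1,p⁻¹)})(h_{(2,p)}g) = ε^s_p(h)g` -/
  antip₁ : ∀ p (h : H 1) (g : H p),
    mu2 k (mul p) ((castH k H (inv_inv p)) ∘ₗ antS p⁻¹) ((mul p).flip g)
        (comul p⁻¹ p (castH k H (inv_mul_cancel p).symm h))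
      = mul p (εs p h) g
  /-- (3.8): `h_{(1,p)}(S(h_{(2,p⁻¹)})g) = ε^t_p(h)g` -/
  antip₂ : ∀ p (h : H 1) (g : H p),
    mu2 k (mul p) LinearMap.id (((mul p).flip g) ∘ₗ (castH k H (inv_inv p)) ∘ₗ antS p⁻¹)
        (comul p p⁻¹ (castH k H (mul_inv_cancel p).symm h))
      = mul p (εt p h) g
  /-- (3.9): `(gh_{(1,p)})S(h_{(2,p⁻¹)}) = gε^t_p(h)` -/
  antip₃ : ∀ p (h : H 1) (g : H p),
    mu2 k (mul p) (mul p g) ((castH k H (inv_inv p)) ∘ₗ antS p⁻¹)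
        (comul p p⁻¹ (castH k H (mul_inv_cancel p).symm h))
      = mul p g (εt p h)
  /-- (3.10): `(gS(h_{(1,p⁻¹)}))h_{(2,p)} = gε^s_p(h)` -/
  antip₄ : ∀ p (h : H 1) (g : H p),
    mu2 k (mul p) ((mul p g) ∘ₗ (castH k H (inv_inv p)) ∘ₗ antS p⁻¹) LinearMap.id
        (comul p⁻¹ p (castH k H (inv_mul_cancel p).symm h))
      = mul p g (εs p h)

end WHQPaper

namespace WHQPaper
set_option linter.unusedSectionVars false

variable {k : Type*} [Field k]

section evals
variable {M N P A B C D E₁ E₂ : Type*} [AddCommGroup M] [Module k M] [AddCommGroup N] [Module k N]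
  [AddCommGroup P] [Module k P] [AddCommGroup A] [Module k A] [AddCommGroup B] [Module k B]
  [AddCommGroup C] [Module k C] [AddCommGroup D] [Module k D]
  [AddCommGroup E₁] [Module k E₁] [AddCommGroup E₂] [Module k E₂]

@[simp] lemma sc2_tmul (f : M →ₗ[k] k) (g : N →ₗ[k] k) (a : M) (b : N) :
    sc2 k f g (a ⊗ₜ[k] b) = f a * g b := rfl

@[simp] lemma sm2_tmul (f : M →ₗ[k] k) (g : N →ₗ[k] P) (a : M) (b : N) :
    sm2 k f g (a ⊗ₜ[k] b) = f a • g b := rfl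

@[simp] lemma mu2_tmul (m : A →ₗ[k] B →ₗ[k] C) (f : M →ₗ[k] A) (g : N →ₗ[k] B) (a : M) (b : N) :
    mu2 k m f g (a ⊗ₜ[k] b) = m (f a) (g b) := rfl

@[simp] lemma pair2_tmul (f : A →ₗ[k] C →ₗ[k] E₁) (g : B →ₗ[k] D →ₗ[k] E₂)
    (a : A) (b : B) (c : C) (d : D) :
    pair2 k f g (a ⊗ₜ[k] b) (c ⊗ₜ[k] d) = f a c ⊗ₜ[k] g b d := rfl

end evals

section casts

variable {G : Type*} [Group G] {H : G → Type*}
  [∀ p, AddCommGroup (H p)] [∀ p, Module k (H p)] (A : GCWHQ k G H)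

@[simp] lemma castH_eq_id {p : G} (e : p = p) : castH k H e = (LinearMap.id : H p →ₗ[k] H p) := rfl

@[simp] lemma castH_refl {p : G} (e : p = p) (x : H p) : castH k H e x = x := rfl

lemma castH_trans {p q r : G} (e : p = q) (e' : q = r) (x : H p) :
    castH k H e' (castH k H e x) = castH k H (e.trans e') x := by subst e; rfl

@[simp] lemma castH_castH {p q : G} (e : p = q) (e' : q = p) (x : H p) :
    castH k H e' (castH k H e x) = x := by subst e; rfl

lemma c_one {q r : G} (e : q = r) : castH k H e (A.one q) = A.one r := by subst e; rfl

lemma c_mul {q r : G} (e : q = r) (x y : H q) :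
    castH k H e (A.mul q x y) = A.mul r (castH k H e x) (castH k H e y) := by subst e; rfl

lemma c_comul_right {a b b' : G} (e : b = b') (e3 : a * b = a * b') (x : H (a * b)) :
    TensorProduct.map LinearMap.id (castH k H e) (A.comul a b x)
      = A.comul a b' (castH k H e3 x) := by subst e; simp [TensorProduct.map_id]

lemma c_comul_left {a a' b : G} (e : a = a') (e3 : a * b = a' * b) (x : H (a * b)) :
    TensorProduct.map (castH k H e) LinearMap.id (A.comul a b x)
      = A.comul a' b (castH k H e3 x) := by subst e; simp [TensorProduct.map_id]

lemma c_antS {q r : G} (e : q = r) (e' : q⁻¹ = r⁻¹) (x : H q) :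
    A.antS r (castH k H e x) = castH k H e' (A.antS q x) := by subst e; rfl

lemma c_εs {q r : G} (e : q = r) (x : H 1) :
    castH k H e (A.εs q x) = A.εs r x := by subst e; rfl

lemma c_εt {q r : G} (e : q = r) (x : H 1) :
    castH k H e (A.εt q x) = A.εt r x := by subst e; rfl

lemma oneMul (q : G) : A.mul q (A.one q) = LinearMap.id := by
  ext x; exact A.one_mul' q x

lemma mulOne (q : G) : (A.mul q).flip (A.one q) = LinearMap.id := by
  ext x; exact A.mul_one' q x

end casts

end WHQPaper
namespace WHQPaper
set_option linter.unusedSectionVars false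
set_option maxHeartbeats 1000000

variable {k : Type*} [Field k]

section generic
variable {M N P Q M' N' A B C : Type*} [AddCommGroup M] [Module k M] [AddCommGroup N] [Module k N]
  [AddCommGroup P] [Module k P] [AddCommGroup Q] [Module k Q]
  [AddCommGroup M'] [Module k M'] [AddCommGroup N'] [Module k N']
  [AddCommGroup A] [Module k A] [AddCommGroup B] [Module k B] [AddCommGroup C] [Module k C]

lemma mu2_map (m : A →ₗ[k] B →ₗ[k] C) (f : M →ₗ[k] A) (g : N →ₗ[k] B)
    (f' : M' →ₗ[k] M) (g' : N' →ₗ[k] N) (t : M' ⊗[k] N') :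
    mu2 k m f g (TensorProduct.map f' g' t) = mu2 k m (f ∘ₗ f') (g ∘ₗ g') t := by
  induction t using TensorProduct.induction_on with
  | zero => simp
  | tmul x y => simp
  | add s t hs ht => simp [map_add, hs, ht]

lemma sm2_map (f : M →ₗ[k] k) (g : N →ₗ[k] P)
    (f' : M' →ₗ[k] M) (g' : N' →ₗ[k] N) (t : M' ⊗[k] N') :
    sm2 k f g (TensorProduct.map f' g' t) = sm2 k (f ∘ₗ f') (g ∘ₗ g') t := by
  induction t using TensorProduct.induction_on with
  | zero => simp
  | tmul x y => simp
  | add s t hs ht => simp [map_add, hs, ht]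

lemma sc2_map (f : M →ₗ[k] k) (g : N →ₗ[k] k)
    (f' : M' →ₗ[k] M) (g' : N' →ₗ[k] N) (t : M' ⊗[k] N') :
    sc2 k f g (TensorProduct.map f' g' t) = sc2 k (f ∘ₗ f') (g ∘ₗ g') t := by
  induction t using TensorProduct.induction_on with
  | zero => simp
  | tmul x y => simp
  | add s t hs ht => simp [map_add, hs, ht]

lemma sm2_push (f : M →ₗ[k] k) (g : N →ₗ[k] P) (L : P →ₗ[k] Q) (t : M ⊗[k] N) :
    L (sm2 k f g t) = sm2 k f (L ∘ₗ g) t := by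
  induction t using TensorProduct.induction_on with
  | zero => simp
  | tmul x y => simp
  | add s t hs ht => simp [map_add, hs, ht]

end generic

section core
variable {G : Type*} [Group G] {H : G → Type*}
  [∀ p, AddCommGroup (H p)] [∀ p, Module k (H p)] (A : GCWHQ k G H)

lemma c_mu2 {M N : Type*} [AddCommGroup M] [Module k M] [AddCommGroup N] [Module k N]
    {q r : G} (e : q = r) (f : M →ₗ[k] H q) (g : N →ₗ[k] H q) (t : M ⊗[k] N) :
    castH k H e (mu2 k (A.mul q) f g t)
      = mu2 k (A.mul r) (castH k H e ∘ₗ f) (castH k H e ∘ₗ g) t := by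
  subst e
  induction t using TensorProduct.induction_on with
  | zero => simp
  | tmul x y => simp
  | add s t hs ht => simp [map_add, hs, ht]

lemma c_εs_comp {q r : G} (e : q = r) : castH k H e ∘ₗ A.εs q = A.εs r := by subst e; rfl

lemma c_εt_comp {q r : G} (e : q = r) : castH k H e ∘ₗ A.εt q = A.εt r := by subst e; rfl

/-- `ε(ab) = ε(a 1₍₂₎) ε(1₍₁₎ b)` -/
lemma L_L2 (a b : H 1) : A.counit (A.mul 1 a b)
    = sc2 k (A.counit ∘ₗ (A.mul 1).flip b) (A.counit ∘ₗ A.mul 1 a)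
        (A.comul 1 1 (A.one (1 * 1))) := by
  have h := A.eps_weak₂ a (A.one 1) b
  rw [A.mul_one'] at h
  rw [h, c_one]

/-- `ε(ab) = ε(a 1₍₁₎) ε(1₍₂₎ b)` -/
lemma L_L1 (a b : H 1) : A.counit (A.mul 1 a b)
    = sc2 k (A.counit ∘ₗ A.mul 1 a) (A.counit ∘ₗ (A.mul 1).flip b)
        (A.comul 1 1 (A.one (1 * 1))) := by
  have h := A.eps_weak₁ a (A.one 1) b
  rw [A.mul_one'] at h
  rw [h, c_one]

lemma L_S1 (a g : H 1) :
    A.counit (A.mul 1 (A.εs 1 a) g) = A.counit (A.mul 1 a g) := by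
  rw [A.εs_def, L_L2 A a g]
  generalize A.comul 1 1 (A.one (1 * 1)) = t
  induction t using TensorProduct.induction_on with
  | zero => simp
  | tmul x y => simp [mul_comm]
  | add s t hs ht => simp only [map_add, LinearMap.add_apply, hs, ht]

lemma L_S2 (a g : H 1) :
    A.counit (A.mul 1 g (A.εt 1 a)) = A.counit (A.mul 1 g a) := by
  rw [A.εt_def, L_L2 A g a]
  generalize A.comul 1 1 (A.one (1 * 1)) = t
  induction t using TensorProduct.induction_on with
  | zero => simp
  | tmul x y => simp
  | add s t hs ht => simp only [map_add, LinearMap.add_apply, hs, ht]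

end core
end WHQPaper
namespace WHQPaper
set_option linter.unusedSectionVars false
set_option maxHeartbeats 1000000

variable {k : Type*} [Field k]
variable {G : Type*} [Group G] {H : G → Type*}
  [∀ p, AddCommGroup (H p)] [∀ p, Module k (H p)] (A : GCWHQ k G H)

/-- `S_e(x) = ε_s(x₁) S(x₂)` with everything recast to `H 1`. -/
lemma S0_eq_s (x : H 1) : castH k H inv_one (A.antS 1 x)
    = mu2 k (A.mul 1) (A.εs 1) (castH k H inv_one ∘ₗ A.antS 1)
        (A.comul 1 1 (castH k H (one_mul (1 : G)).symm x)) := by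
  rw [← A.εs_conv_S 1 x, c_mu2 A inv_one, c_εs_comp]

/-- `S_e(x) = S(x₁) ε_t(x₂)` with everything recast to `H 1`. -/
lemma S0_eq_t (x : H 1) : castH k H inv_one (A.antS 1 x)
    = mu2 k (A.mul 1) (castH k H inv_one ∘ₗ A.antS 1) (A.εt 1)
        (A.comul 1 1 (castH k H (mul_one (1 : G)).symm x)) := by
  rw [← A.S_conv_εt 1 x, c_mu2 A inv_one, c_εt_comp]

lemma S0_cast (b : H ((1 : G)⁻¹)) :
    castH k H inv_one (A.antS 1 (castH k H inv_one b))
      = castH k H (inv_inv 1) (A.antS 1⁻¹ b) := by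
  rw [c_antS A inv_one (congrArg Inv.inv inv_one), castH_trans]

/-- `ε(S_e(x) g) = ε(ε_t(x) g)`. -/
lemma L_C (x g : H 1) :
    A.counit (A.mul 1 (castH k H inv_one (A.antS 1 x)) g)
      = A.counit (A.mul 1 (A.εt 1 x) g) := by
  rw [S0_eq_s, ← A.antip₂ 1 x g]
  have hT : A.comul 1 1 (castH k H (one_mul (1:G)).symm x)
      = TensorProduct.map LinearMap.id (castH k H inv_one)
          (A.comul 1 1⁻¹ (castH k H (mul_inv_cancel (1:G)).symm x)) := by
    rw [c_comul_right A inv_one (by rw [inv_one]), castH_trans]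
  rw [hT, mu2_map]
  generalize (A.comul 1 1⁻¹ (castH k H (mul_inv_cancel (1:G)).symm x)) = t
  induction t using TensorProduct.induction_on with
  | zero => simp
  | tmul a b =>
      simp only [mu2_tmul, LinearMap.comp_apply, LinearMap.id_apply, LinearMap.flip_apply]
      rw [S0_cast, A.eps_assoc, L_S1]
  | add s t hs ht => simp only [map_add, LinearMap.add_apply, hs, ht]

end WHQPaper
namespace WHQPaper
set_option linter.unusedSectionVars false
set_option maxHeartbeats 1000000

variable {k : Type*} [Field k]

section generic2
variable {M N P N' : Type*} [AddCommGroup M] [Module k M] [AddCommGroup N] [Module k N]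
  [AddCommGroup P] [Module k P] [AddCommGroup N'] [Module k N']

lemma sm2_id_map (f : M →ₗ[k] k) (g' : N' →ₗ[k] N) (t : M ⊗[k] N') :
    sm2 k f LinearMap.id (TensorProduct.map LinearMap.id g' t) = sm2 k f g' t := by
  induction t using TensorProduct.induction_on with
  | zero => simp
  | tmul x y => simp
  | add s t hs ht => simp [map_add, hs, ht]

end generic2

variable {G : Type*} [Group G] {H : G → Type*}
  [∀ p, AddCommGroup (H p)] [∀ p, Module k (H p)] (A : GCWHQ k G H)

/-- `ε(ε_t(x) 1₍₁ₑ₎) 1₍₂ₚ₎ = ε_t^p(x)` -/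
lemma L_absorb (p : G) (x : H 1) :
    sm2 k (A.counit ∘ₗ A.mul 1 (A.εt 1 x)) LinearMap.id (A.comul 1 p (A.one (1 * p)))
      = A.εt p x := by
  set Φ : (H 1 ⊗[k] H 1) ⊗[k] H p →ₗ[k] H p :=
    sm2 k (sc2 k (A.counit ∘ₗ (A.mul 1).flip x) A.counit) LinearMap.id with hΦ
  have stepA : ∀ t : H 1 ⊗[k] H p,
      sm2 k (A.counit ∘ₗ A.mul 1 (A.εt 1 x)) LinearMap.id t
        = Φ (pair2 k (pair2 k (A.mul 1) (A.mul 1)) (A.mul p)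
            ((A.comul 1 1 (A.one (1 * 1))) ⊗ₜ[k] (A.one p))
            ((TensorProduct.assoc k (H 1) (H 1) (H p)).symm
              ((A.one 1) ⊗ₜ[k] t))) := by
    intro t
    induction t using TensorProduct.induction_on with
    | zero => simp
    | tmul c d =>
        simp only [sm2_tmul, LinearMap.comp_apply, LinearMap.id_apply,
          TensorProduct.assoc_symm_tmul]
        rw [A.εt_def]
        generalize A.comul 1 1 (A.one (1 * 1)) = W
        induction W using TensorProduct.induction_on with
        | zero => simp
        | tmul w w' =>
            simp [hΦ, A.mul_one', A.one_mul', smul_smul]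
        | add s t hs ht =>
            simp only [map_add, LinearMap.add_apply, TensorProduct.add_tmul, add_smul, hs, ht]
    | add s t hs ht =>
        simp only [TensorProduct.tmul_add, map_add, hs, ht]
  rw [stepA, ← A.unit_weak₁ 1 1 p]
  have hco := A.coassoc 1 1 p (A.one (1 * 1 * p))
  rw [c_one A (mul_assoc 1 1 p)] at hco
  have hco' : (TensorProduct.map (A.comul 1 1) LinearMap.id)
      (A.comul (1 * 1) p (A.one (1 * 1 * p)))
      = (TensorProduct.assoc k (H 1) (H 1) (H p)).symm
          ((TensorProduct.map LinearMap.id (A.comul 1 p))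
            (A.comul 1 (1 * p) (A.one (1 * (1 * p))))) := by
    rw [← hco, LinearEquiv.symm_apply_apply]
  rw [hco']
  have stepD : ∀ t : H 1 ⊗[k] H (1 * p),
      Φ ((TensorProduct.assoc k (H 1) (H 1) (H p)).symm
          ((TensorProduct.map LinearMap.id (A.comul 1 p)) t))
        = sm2 k (A.counit ∘ₗ (A.mul 1).flip x) (castH k H (one_mul p)) t := by
    intro t
    induction t using TensorProduct.induction_on with
    | zero => simp
    | tmul a b =>
        have inner : ∀ s : H 1 ⊗[k] H p,
            Φ ((TensorProduct.assoc k (H 1) (H 1) (H p)).symm (a ⊗ₜ[k] s))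
              = A.counit (A.mul 1 a x) •
                  (TensorProduct.lid k (H p))
                    ((TensorProduct.map A.counit LinearMap.id) s) := by
          intro s
          induction s using TensorProduct.induction_on with
          | zero => simp
          | tmul u v =>
              simp [hΦ, TensorProduct.assoc_symm_tmul, smul_smul]
          | add s t hs ht => simp only [TensorProduct.tmul_add, map_add, hs, ht, smul_add]
        simp only [TensorProduct.map_tmul, LinearMap.id_apply, inner]
        have hc : (TensorProduct.lid k (H p))
            ((TensorProduct.map A.counit LinearMap.id) (A.comul 1 p b))
            = castH k H (one_mul p) b := by
          have := A.counit_left p (castH k H (one_mul p) b)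
          rwa [castH_castH] at this
        rw [hc]
        simp
    | add s t hs ht => simp only [map_add, hs, ht]
  rw [stepD, ← sm2_id_map (A.counit ∘ₗ (A.mul 1).flip x) (castH k H (one_mul p)),
    c_comul_right A (one_mul p) (by rw [one_mul]), c_one, ← A.εt_def]

/-- Goal 1: `ε_t^p = ε̃_s^p ∘ S_e`. -/
lemma G1 (p : G) : A.εt p = A.εs' p ∘ₗ castH k H inv_one ∘ₗ A.antS 1 := by
  ext h
  simp only [LinearMap.comp_apply]
  rw [A.εs'_def]
  have : A.counit ∘ₗ A.mul 1 (castH k H inv_one (A.antS 1 h))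
      = A.counit ∘ₗ A.mul 1 (A.εt 1 h) := by
    apply LinearMap.ext; intro c
    exact L_C A h c
  rw [this, L_absorb]

end WHQPaper
namespace WHQPaper
set_option linter.unusedSectionVars false
set_option maxHeartbeats 1000000

variable {k : Type*} [Field k]

section generic3
variable {M N M' N' : Type*} [AddCommGroup M] [Module k M] [AddCommGroup N] [Module k N]
  [AddCommGroup M'] [Module k M'] [AddCommGroup N'] [Module k N']

lemma comm_map (f : M →ₗ[k] M') (g : N →ₗ[k] N') (t : M ⊗[k] N) :
    TensorProduct.map g f ((TensorProduct.comm k M N) t)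
      = (TensorProduct.comm k M' N') (TensorProduct.map f g t) := by
  induction t using TensorProduct.induction_on with
  | zero => simp
  | tmul x y => simp
  | add s t hs ht => simp [map_add, hs, ht]

end generic3

variable {G : Type*} [Group G] {H : G → Type*}
  [∀ p, AddCommGroup (H p)] [∀ p, Module k (H p)] (A : GCWHQ k G H)

/-- `ε(g S_e(x)) = ε(g ε_s(x))`. -/
lemma L_C' (x g : H 1) :
    A.counit (A.mul 1 g (castH k H inv_one (A.antS 1 x)))
      = A.counit (A.mul 1 g (A.εs 1 x)) := by
  rw [S0_eq_t, ← A.antip₄ 1 x g]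
  have hT : A.comul 1 1 (castH k H (mul_one (1:G)).symm x)
      = TensorProduct.map (castH k H inv_one) LinearMap.id
          (A.comul 1⁻¹ 1 (castH k H (inv_mul_cancel (1:G)).symm x)) := by
    rw [c_comul_left A inv_one (by rw [inv_one]), castH_trans]
  rw [hT, mu2_map]
  generalize (A.comul 1⁻¹ 1 (castH k H (inv_mul_cancel (1:G)).symm x)) = t
  induction t using TensorProduct.induction_on with
  | zero => simp
  | tmul a b =>
      simp only [mu2_tmul, LinearMap.comp_apply, LinearMap.id_apply]
      rw [S0_cast, ← A.eps_assoc, L_S2]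
  | add s t hs ht => simp only [map_add, LinearMap.add_apply, hs, ht]

/-- `1₍₁ₚ₎ ε(1₍₂ₑ₎ ε_s(x)) = ε_s^p(x)` -/
lemma L_absorb' (p : G) (x : H 1) :
    sm2 k (A.counit ∘ₗ (A.mul 1).flip (A.εs 1 x)) LinearMap.id
        ((TensorProduct.comm k (H p) (H 1)) (A.comul p 1 (A.one (p * 1))))
      = A.εs p x := by
  set Φ : (H p ⊗[k] H 1) ⊗[k] H 1 →ₗ[k] H p :=
    (sm2 k (A.counit ∘ₗ A.mul 1 x)
        (sm2 k A.counit LinearMap.id ∘ₗ (TensorProduct.comm k (H p) (H 1)).toLinearMap)) ∘ₗ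
      (TensorProduct.comm k (H p ⊗[k] H 1) (H 1)).toLinearMap with hΦ
  have stepA : ∀ t : H p ⊗[k] H 1,
      sm2 k (A.counit ∘ₗ (A.mul 1).flip (A.εs 1 x)) LinearMap.id
          ((TensorProduct.comm k (H p) (H 1)) t)
        = Φ (pair2 k (pair2 k (A.mul p) (A.mul 1)) (A.mul 1)
            (t ⊗ₜ[k] (A.one 1))
            ((TensorProduct.assoc k (H p) (H 1) (H 1)).symm
              ((A.one p) ⊗ₜ[k] (A.comul 1 1 (A.one (1 * 1)))))) := by
    intro t
    induction t using TensorProduct.induction_on with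
    | zero => simp
    | tmul c d =>
        simp only [TensorProduct.comm_tmul, sm2_tmul, LinearMap.comp_apply,
          LinearMap.id_apply, LinearMap.flip_apply]
        rw [A.εs_def]
        generalize A.comul 1 1 (A.one (1 * 1)) = W
        induction W using TensorProduct.induction_on with
        | zero => simp
        | tmul w w' =>
            simp [hΦ, A.mul_one', A.one_mul', smul_smul, mul_comm]
        | add s t hs ht =>
            simp only [map_add, LinearMap.add_apply, TensorProduct.tmul_add, add_smul,
              hs, ht]
    | add s t hs ht =>
        simp only [TensorProduct.add_tmul, map_add, LinearMap.add_apply, hs, ht]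
  rw [stepA, ← A.unit_weak₁ p 1 1]
  have hco := A.coassoc p 1 1 (A.one (p * 1 * 1))
  rw [c_one A (mul_assoc p 1 1)] at hco
  have hco' : (TensorProduct.map (A.comul p 1) LinearMap.id)
      (A.comul (p * 1) 1 (A.one (p * 1 * 1)))
      = (TensorProduct.assoc k (H p) (H 1) (H 1)).symm
          ((TensorProduct.map LinearMap.id (A.comul 1 1))
            (A.comul p (1 * 1) (A.one (p * (1 * 1))))) := by
    rw [← hco, LinearEquiv.symm_apply_apply]
  rw [hco']
  have stepD : ∀ t : H p ⊗[k] H (1 * 1),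
      Φ ((TensorProduct.assoc k (H p) (H 1) (H 1)).symm
          ((TensorProduct.map LinearMap.id (A.comul 1 1)) t))
        = sm2 k (A.counit ∘ₗ A.mul 1 x ∘ₗ castH k H (one_mul (1:G))) LinearMap.id
            ((TensorProduct.comm k (H p) (H (1 * 1))) t) := by
    intro t
    induction t using TensorProduct.induction_on with
    | zero => simp
    | tmul a b =>
        have inner : ∀ s : H 1 ⊗[k] H 1,
            Φ ((TensorProduct.assoc k (H p) (H 1) (H 1)).symm (a ⊗ₜ[k] s))
              = A.counit (A.mul 1 x
                  ((TensorProduct.lid k (H 1))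
                    ((TensorProduct.map A.counit LinearMap.id) s))) • a := by
          intro s
          induction s using TensorProduct.induction_on with
          | zero => simp
          | tmul u v =>
              simp [hΦ, TensorProduct.assoc_symm_tmul, smul_smul, mul_comm]
          | add s t hs ht =>
              simp only [TensorProduct.tmul_add, map_add, hs, ht, add_smul]
        simp only [TensorProduct.map_tmul, LinearMap.id_apply, inner]
        have hc : (TensorProduct.lid k (H 1))
            ((TensorProduct.map A.counit LinearMap.id) (A.comul 1 1 b))
            = castH k H (one_mul (1:G)) b := by
          have := A.counit_left 1 (castH k H (one_mul (1:G)) b)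
          rwa [castH_castH] at this
        rw [hc]
        simp
    | add s t hs ht => simp only [map_add, hs, ht]
  rw [stepD]
  have hfin : (TensorProduct.map (castH k H (one_mul (1:G))) LinearMap.id)
      ((TensorProduct.comm k (H p) (H (1*1))) (A.comul p (1*1) (A.one (p*(1*1)))))
      = (TensorProduct.comm k (H p) (H 1)) (A.comul p 1 (A.one (p*1))) := by
    rw [comm_map, c_comul_right A (one_mul (1:G)) (by rw [one_mul]), c_one]
  rw [A.εs_def, ← hfin, sm2_map]
  rfl

/-- Goal 3: `ε_s^p = ε̃_t^p ∘ S_e`. -/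
lemma G3 (p : G) : A.εs p = A.εt' p ∘ₗ castH k H inv_one ∘ₗ A.antS 1 := by
  ext h
  simp only [LinearMap.comp_apply]
  rw [A.εt'_def]
  have : A.counit ∘ₗ (A.mul 1).flip (castH k H inv_one (A.antS 1 h))
      = A.counit ∘ₗ (A.mul 1).flip (A.εs 1 h) := by
    apply LinearMap.ext; intro c
    exact L_C' A h c
  rw [this, L_absorb']

end WHQPaper
namespace WHQPaper
set_option linter.unusedSectionVars false
set_option maxHeartbeats 1000000

variable {k : Type*} [Field k]

section generic4
variable {M N P Q C M' N' : Type*} [AddCommGroup M] [Module k M] [AddCommGroup N] [Module k N]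
  [AddCommGroup P] [Module k P] [AddCommGroup Q] [Module k Q] [AddCommGroup C] [Module k C]
  [AddCommGroup M'] [Module k M'] [AddCommGroup N'] [Module k N']

lemma sm2_add_f (f g : M →ₗ[k] k) (φ : N →ₗ[k] P) (t : M ⊗[k] N) :
    sm2 k (f + g) φ t = sm2 k f φ t + sm2 k g φ t := by
  induction t using TensorProduct.induction_on with
  | zero => simp
  | tmul x y => simp [add_smul]
  | add s t hs ht => simp only [map_add, hs, ht]; abel

lemma sm2_zero_f (φ : N →ₗ[k] P) (t : M ⊗[k] N) :
    sm2 k (0 : M →ₗ[k] k) φ t = 0 := by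
  induction t using TensorProduct.induction_on with
  | zero => simp
  | tmul x y => simp
  | add s t hs ht => simp [map_add, hs, ht]

lemma mu2_map_right (m : P →ₗ[k] Q →ₗ[k] C) (f : M →ₗ[k] P) (g : N →ₗ[k] Q)
    (c : N' →ₗ[k] N) (t : M ⊗[k] N') :
    mu2 k m f g (TensorProduct.map LinearMap.id c t) = mu2 k m f (g ∘ₗ c) t := by
  induction t using TensorProduct.induction_on with
  | zero => simp
  | tmul x y => simp
  | add s t hs ht => simp [map_add, hs, ht]

lemma map_map (f : M →ₗ[k] M') (g : N →ₗ[k] N') (f' : P →ₗ[k] M) (g' : Q →ₗ[k] N)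
    (t : P ⊗[k] Q) :
    TensorProduct.map f g (TensorProduct.map f' g' t)
      = TensorProduct.map (f ∘ₗ f') (g ∘ₗ g') t := by
  induction t using TensorProduct.induction_on with
  | zero => simp
  | tmul x y => simp
  | add s t hs ht => simp [map_add, hs, ht]

/-- `c ↦ ψ ((m c ⊗ id) s)`. -/
def couple (m : C →ₗ[k] M →ₗ[k] M) (ψ : M ⊗[k] N →ₗ[k] k) (s : M ⊗[k] N) : C →ₗ[k] k :=
  ψ ∘ₗ (LinearMap.applyₗ s) ∘ₗ (LinearMap.rTensorHom N) ∘ₗ m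

lemma couple_apply (m : C →ₗ[k] M →ₗ[k] M) (ψ : M ⊗[k] N →ₗ[k] k) (s : M ⊗[k] N) (c : C) :
    couple m ψ s c = ψ (TensorProduct.map (m c) LinearMap.id s) := rfl

lemma couple_add (m : C →ₗ[k] M →ₗ[k] M) (ψ : M ⊗[k] N →ₗ[k] k) (s t : M ⊗[k] N) :
    couple m ψ (s + t) = couple m ψ s + couple m ψ t := by
  apply LinearMap.ext; intro c
  simp [couple_apply, map_add]

lemma couple_zero (m : C →ₗ[k] M →ₗ[k] M) (ψ : M ⊗[k] N →ₗ[k] k) :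
    couple m ψ (0 : M ⊗[k] N) = 0 := by
  apply LinearMap.ext; intro c
  simp [couple_apply]

end generic4

variable {G : Type*} [Group G] {H : G → Type*}
  [∀ p, AddCommGroup (H p)] [∀ p, Module k (H p)] (A : GCWHQ k G H)

/-- `ε_t^p(x₍₁₎) ε(x₍₂₎ h) = ε_t^p(x h)` (summed over `Δ(x)`). -/
lemma L_mulεt (p : G) (h x : H 1) :
    sm2 k (A.counit ∘ₗ (A.mul 1).flip h) (A.εt p)
        ((TensorProduct.comm k (H 1) (H 1)) (A.comul 1 1 (castH k H (one_mul (1:G)).symm x)))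
      = A.εt p (A.mul 1 x h) := by
  rw [A.εt_def p (A.mul 1 x h)]
  set Ψ : H 1 ⊗[k] H 1 →ₗ[k] k := sc2 k A.counit (A.counit ∘ₗ (A.mul 1).flip h) with hΨ
  have step1 : ∀ t : H 1 ⊗[k] H p,
      sm2 k (A.counit ∘ₗ (A.mul 1).flip (A.mul 1 x h)) LinearMap.id t
        = sm2 k (couple (A.mul 1) Ψ
            (A.comul 1 1 (castH k H (one_mul (1:G)).symm x))) LinearMap.id t := by
    intro t
    induction t using TensorProduct.induction_on with
    | zero => simp
    | tmul c d =>
        simp only [sm2_tmul, LinearMap.comp_apply, LinearMap.flip_apply]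
        congr 1
        rw [← A.eps_assoc, A.eps_weak₁ c x h, couple_apply, sc2_map]
        rfl
    | add s t hs ht => simp only [map_add, hs, ht]
  rw [step1]
  have step2 : ∀ s : H 1 ⊗[k] H 1,
      sm2 k (couple (A.mul 1) Ψ s) LinearMap.id (A.comul 1 p (A.one (1 * p)))
        = sm2 k (A.counit ∘ₗ (A.mul 1).flip h) (A.εt p)
            ((TensorProduct.comm k (H 1) (H 1)) s) := by
    intro s
    induction s using TensorProduct.induction_on with
    | zero => rw [couple_zero, sm2_zero_f]; simp
    | tmul a b =>
        rw [TensorProduct.comm_tmul, sm2_tmul, A.εt_def p a]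
        generalize A.comul 1 p (A.one (1 * p)) = u
        induction u using TensorProduct.induction_on with
        | zero => simp
        | tmul c d =>
            simp only [sm2_tmul, couple_apply, LinearMap.id_apply, TensorProduct.map_tmul,
              hΨ, sc2_tmul, LinearMap.comp_apply, LinearMap.flip_apply, smul_smul]
            rw [mul_comm]
        | add s t hs ht => simp only [map_add, hs, ht, smul_add]
    | add s t hs ht =>
        rw [couple_add, sm2_add_f, hs, ht]
        simp only [map_add]
  rw [step2]

end WHQPaper
namespace WHQPaper
set_option linter.unusedSectionVars false
set_option maxHeartbeats 1000000

variable {k : Type*} [Field k]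
variable {G : Type*} [Group G] {H : G → Type*}
  [∀ p, AddCommGroup (H p)] [∀ p, Module k (H p)] (A : GCWHQ k G H)

/-- `(ε_s^p ⊗ id) Δ_{1,p⁻¹}(1) = Δ_{p,p⁻¹}(1)`. -/
lemma G2G (p : G) :
    TensorProduct.map (A.εs p) LinearMap.id (A.comul 1 p⁻¹ (A.one (1 * p⁻¹)))
      = A.comul p p⁻¹ (A.one (p * p⁻¹)) := by
  set Λ : (H p ⊗[k] H 1) ⊗[k] H p⁻¹ →ₗ[k] H p ⊗[k] H p⁻¹ :=
    TensorProduct.map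
      ((TensorProduct.rid k (H p)).toLinearMap ∘ₗ TensorProduct.map LinearMap.id A.counit)
      LinearMap.id with hΛ
  have stepB1 : ∀ s : H 1 ⊗[k] H p⁻¹,
      TensorProduct.map (A.εs p) LinearMap.id s
        = Λ (pair2 k (pair2 k (A.mul p) (A.mul 1)) (A.mul p⁻¹)
            ((TensorProduct.assoc k (H p) (H 1) (H p⁻¹)).symm ((A.one p) ⊗ₜ[k] s))
            ((A.comul p 1 (A.one (p * 1))) ⊗ₜ[k] (A.one p⁻¹))) := by
    intro s
    induction s using TensorProduct.induction_on with
    | zero => simp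
    | tmul b c =>
        simp only [TensorProduct.map_tmul, LinearMap.id_apply,
          TensorProduct.assoc_symm_tmul]
        rw [A.εs_def]
        generalize A.comul p 1 (A.one (p * 1)) = U
        induction U using TensorProduct.induction_on with
        | zero => simp
        | tmul u₁ u₂ =>
            simp [hΛ, A.mul_one', A.one_mul', TensorProduct.smul_tmul']
        | add s t hs ht =>
            simp only [map_add, LinearMap.add_apply, TensorProduct.add_tmul, hs, ht]
    | add s t hs ht =>
        simp only [TensorProduct.tmul_add, map_add, LinearMap.add_apply, hs, ht]
  rw [stepB1, ← A.unit_weak₂ p 1 p⁻¹]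
  have stepB3 : ∀ t : H (p * 1) ⊗[k] H p⁻¹,
      Λ ((TensorProduct.map (A.comul p 1) LinearMap.id) t)
        = TensorProduct.map (castH k H (mul_one p)) LinearMap.id t := by
    intro t
    induction t using TensorProduct.induction_on with
    | zero => simp
    | tmul a c =>
        simp only [TensorProduct.map_tmul, LinearMap.id_apply, hΛ, LinearMap.comp_apply]
        congr 1
        have := A.counit_right p (castH k H (mul_one p) a)
        rwa [castH_castH] at this
    | add s t hs ht => simp only [map_add, hs, ht]
  rw [stepB3, c_comul_left A (mul_one p) (by rw [mul_one]), c_one]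

/-- `(id ⊗ ε_t^p) Δ_{p⁻¹,1}(1) = Δ_{p⁻¹,p}(1)`. -/
lemma G4G (p : G) :
    TensorProduct.map LinearMap.id (A.εt p) (A.comul p⁻¹ 1 (A.one (p⁻¹ * 1)))
      = A.comul p⁻¹ p (A.one (p⁻¹ * p)) := by
  set Λ : H p⁻¹ ⊗[k] (H 1 ⊗[k] H p) →ₗ[k] H p⁻¹ ⊗[k] H p :=
    TensorProduct.map LinearMap.id
      ((TensorProduct.lid k (H p)).toLinearMap ∘ₗ TensorProduct.map A.counit LinearMap.id)
      with hΛ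
  have stepB1 : ∀ s : H p⁻¹ ⊗[k] H 1,
      TensorProduct.map LinearMap.id (A.εt p) s
        = Λ ((TensorProduct.assoc k (H p⁻¹) (H 1) (H p))
            (pair2 k (pair2 k (A.mul p⁻¹) (A.mul 1)) (A.mul p)
              ((TensorProduct.assoc k (H p⁻¹) (H 1) (H p)).symm
                ((A.one p⁻¹) ⊗ₜ[k] (A.comul 1 p (A.one (1 * p)))))
              (s ⊗ₜ[k] (A.one p)))) := by
    intro s
    induction s using TensorProduct.induction_on with
    | zero => simp
    | tmul b c =>
        simp only [TensorProduct.map_tmul, LinearMap.id_apply]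
        rw [A.εt_def]
        generalize A.comul 1 p (A.one (1 * p)) = U
        induction U using TensorProduct.induction_on with
        | zero => simp
        | tmul u₁ u₂ =>
            simp only [TensorProduct.assoc_symm_tmul, pair2_tmul, sm2_tmul,
              LinearMap.comp_apply, LinearMap.flip_apply, A.mul_one', A.one_mul',
              TensorProduct.assoc_tmul, hΛ, TensorProduct.map_tmul, LinearMap.id_apply,
              LinearEquiv.coe_coe, TensorProduct.lid_tmul, TensorProduct.tmul_smul]
        | add s t hs ht =>
            simp only [map_add, LinearMap.add_apply, TensorProduct.tmul_add,
              TensorProduct.add_tmul, hs, ht]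
    | add s t hs ht =>
        simp only [TensorProduct.add_tmul, map_add, LinearMap.add_apply, hs, ht]
  rw [stepB1, ← A.unit_weak₂ p⁻¹ 1 p]
  have stepB3 : ∀ t : H (p⁻¹ * 1) ⊗[k] H p,
      Λ ((TensorProduct.assoc k (H p⁻¹) (H 1) (H p))
          ((TensorProduct.map (A.comul p⁻¹ 1) LinearMap.id) t))
        = TensorProduct.map (castH k H (mul_one p⁻¹)) LinearMap.id t := by
    intro t
    induction t using TensorProduct.induction_on with
    | zero => simp
    | tmul a c =>
        have inner : ∀ s : H p⁻¹ ⊗[k] H 1,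
            Λ ((TensorProduct.assoc k (H p⁻¹) (H 1) (H p)) (s ⊗ₜ[k] c))
              = ((TensorProduct.rid k (H p⁻¹))
                  ((TensorProduct.map LinearMap.id A.counit) s)) ⊗ₜ[k] c := by
          intro s
          induction s using TensorProduct.induction_on with
          | zero => simp
          | tmul y z =>
              simp only [TensorProduct.assoc_tmul, hΛ, TensorProduct.map_tmul,
                LinearMap.id_apply, LinearMap.comp_apply, LinearEquiv.coe_coe,
                TensorProduct.lid_tmul, TensorProduct.rid_tmul, TensorProduct.tmul_smul,
                TensorProduct.smul_tmul']
          | add s t hs ht =>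
              simp only [TensorProduct.add_tmul, map_add, hs, ht]
        simp only [TensorProduct.map_tmul, LinearMap.id_apply, inner]
        congr 1
        have := A.counit_right p⁻¹ (castH k H (mul_one p⁻¹) a)
        rwa [castH_castH] at this
    | add s t hs ht => simp only [map_add, hs, ht]
  rw [stepB3, c_comul_left A (mul_one p⁻¹) (by rw [mul_one]), c_one]

end WHQPaper
namespace WHQPaper
set_option linter.unusedSectionVars false
set_option maxHeartbeats 1600000

variable {k : Type*} [Field k]

section generic5
variable {M N P Q N' : Type*} [AddCommGroup M] [Module k M] [AddCommGroup N] [Module k N]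
  [AddCommGroup P] [Module k P] [AddCommGroup Q] [Module k Q] [AddCommGroup N'] [Module k N']

lemma map_id_comp (f : N →ₗ[k] P) (g : N' →ₗ[k] N) (t : M ⊗[k] N') :
    TensorProduct.map LinearMap.id (f ∘ₗ g) t
      = TensorProduct.map LinearMap.id f (TensorProduct.map LinearMap.id g t) := by
  induction t using TensorProduct.induction_on with
  | zero => simp
  | tmul x y => simp
  | add s t hs ht => simp [map_add, hs, ht]

lemma map_comp_id (f : N →ₗ[k] P) (g : N' →ₗ[k] N) (t : N' ⊗[k] M) :
    TensorProduct.map (f ∘ₗ g) LinearMap.id t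
      = TensorProduct.map f LinearMap.id (TensorProduct.map g LinearMap.id t) := by
  induction t using TensorProduct.induction_on with
  | zero => simp
  | tmul x y => simp
  | add s t hs ht => simp [map_add, hs, ht]

lemma map_zero_right (f : M →ₗ[k] P) (t : M ⊗[k] N) :
    TensorProduct.map f (0 : N →ₗ[k] Q) t = 0 := by
  induction t using TensorProduct.induction_on with
  | zero => simp
  | tmul x y => simp
  | add s t hs ht => simp [map_add, hs, ht]

lemma map_add_right (f : M →ₗ[k] P) (g g' : N →ₗ[k] Q) (t : M ⊗[k] N) :
    TensorProduct.map f (g + g') t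
      = TensorProduct.map f g t + TensorProduct.map f g' t := by
  induction t using TensorProduct.induction_on with
  | zero => simp
  | tmul x y => simp [TensorProduct.tmul_add]
  | add s t hs ht => simp only [map_add, hs, ht]; abel

end generic5

variable {G : Type*} [Group G] {H : G → Type*}
  [∀ p, AddCommGroup (H p)] [∀ p, Module k (H p)] (A : GCWHQ k G H)

lemma L_A (p : G) (x : H 1) :
    mu2 k (A.mul p) LinearMap.id (castH k H (inv_inv p) ∘ₗ A.antS p⁻¹)
      (A.comul p p⁻¹ (castH k H (mul_inv_cancel p).symm x)) = A.εt p x := by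
  have h := A.antip₃ p x (A.one p)
  rw [oneMul] at h
  simpa using h

lemma L_B (p : G) (x : H 1) :
    mu2 k (A.mul p) (castH k H (inv_inv p) ∘ₗ A.antS p⁻¹) LinearMap.id
      (A.comul p⁻¹ p (castH k H (inv_mul_cancel p).symm x)) = A.εs p x := by
  have h := A.antip₄ p x (A.one p)
  rw [oneMul] at h
  simpa using h

/-- Goal 2: `ε_t^p = S_{p⁻¹} ∘ ε̃_t^{p⁻¹}`. -/
lemma G2 (p : G) :
    A.εt p = castH k H (inv_inv p) ∘ₗ A.antS p⁻¹ ∘ₗ A.εt' p⁻¹ := by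
  ext h
  simp only [LinearMap.comp_apply]
  rw [A.εt'_def]
  symm
  set Sc : H p⁻¹ →ₗ[k] H p := castH k H (inv_inv p) ∘ₗ A.antS p⁻¹ with hSc
  set W : H p⁻¹ ⊗[k] H 1 := A.comul p⁻¹ 1 (A.one (p⁻¹ * 1)) with hW
  have ScEq : ∀ y : H p⁻¹, Sc y
      = mu2 k (A.mul p) Sc (A.εt p) (A.comul p⁻¹ 1 (castH k H (mul_one p⁻¹).symm y)) := by
    intro y
    rw [hSc, LinearMap.comp_apply, ← A.S_conv_εt p⁻¹ y, c_mu2 A (inv_inv p), c_εt_comp]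
  -- push `Sc` inside the `sm2`
  rw [sm2_push, sm2_push]
  have hfold : castH k H (inv_inv p) ∘ₗ A.antS p⁻¹ ∘ₗ LinearMap.id = Sc := by
    rw [LinearMap.comp_id, hSc]
  rw [hfold]
  set Φ₁ : (H p⁻¹ ⊗[k] H 1) ⊗[k] H 1 →ₗ[k] H p :=
    (sm2 k (A.counit ∘ₗ (A.mul 1).flip h) (mu2 k (A.mul p) Sc (A.εt p))) ∘ₗ
      (TensorProduct.comm k (H p⁻¹ ⊗[k] H 1) (H 1)).toLinearMap with hΦ₁
  have step1 : ∀ t : H p⁻¹ ⊗[k] H 1,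
      sm2 k (A.counit ∘ₗ (A.mul 1).flip h) Sc ((TensorProduct.comm k (H p⁻¹) (H 1)) t)
        = Φ₁ ((TensorProduct.map ((A.comul p⁻¹ 1) ∘ₗ castH k H (mul_one p⁻¹).symm)
            LinearMap.id) t) := by
    intro t
    induction t using TensorProduct.induction_on with
    | zero => simp
    | tmul a c =>
        simp only [TensorProduct.comm_tmul, sm2_tmul, TensorProduct.map_tmul,
          LinearMap.id_apply, LinearMap.comp_apply, hΦ₁, LinearEquiv.coe_coe]
        rw [ScEq a]
    | add s t hs ht => simp only [map_add, hs, ht]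
  rw [step1]
  have hW1 : (TensorProduct.map ((A.comul p⁻¹ 1) ∘ₗ castH k H (mul_one p⁻¹).symm)
      LinearMap.id) W
      = (TensorProduct.assoc k (H p⁻¹) (H 1) (H 1)).symm
          ((TensorProduct.map LinearMap.id (A.comul 1 1))
            (A.comul p⁻¹ (1 * 1) (A.one (p⁻¹ * (1 * 1))))) := by
    rw [map_comp_id, hW, c_comul_left A (mul_one p⁻¹).symm (mul_one (p⁻¹ * 1)).symm, c_one]
    have hco := A.coassoc p⁻¹ 1 1 (A.one (p⁻¹ * 1 * 1))
    rw [c_one A (mul_assoc p⁻¹ 1 1)] at hco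
    rw [← hco, LinearEquiv.symm_apply_apply]
  rw [hW1]
  have step3 : ∀ t : H p⁻¹ ⊗[k] H (1 * 1),
      Φ₁ ((TensorProduct.assoc k (H p⁻¹) (H 1) (H 1)).symm
          ((TensorProduct.map LinearMap.id (A.comul 1 1)) t))
        = mu2 k (A.mul p) Sc
            ((A.εt p ∘ₗ (A.mul 1).flip h) ∘ₗ castH k H (one_mul (1:G))) t := by
    intro t
    induction t using TensorProduct.induction_on with
    | zero => simp
    | tmul a b =>
        have inner : ∀ s : H 1 ⊗[k] H 1,
            Φ₁ ((TensorProduct.assoc k (H p⁻¹) (H 1) (H 1)).symm (a ⊗ₜ[k] s))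
              = A.mul p (Sc a)
                  (sm2 k (A.counit ∘ₗ (A.mul 1).flip h) (A.εt p)
                    ((TensorProduct.comm k (H 1) (H 1)) s)) := by
          intro s
          induction s using TensorProduct.induction_on with
          | zero => simp
          | tmul u v =>
              simp only [TensorProduct.assoc_symm_tmul, hΦ₁, LinearMap.comp_apply,
                LinearEquiv.coe_coe, TensorProduct.comm_tmul, sm2_tmul, mu2_tmul,
                LinearMap.flip_apply, map_smul, LinearMap.smul_apply]
          | add s t hs ht => simp only [TensorProduct.tmul_add, map_add, hs, ht]
        simp only [TensorProduct.map_tmul, LinearMap.id_apply, inner]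
        have hb : A.comul 1 1 b
            = A.comul 1 1 (castH k H (one_mul (1:G)).symm (castH k H (one_mul (1:G)) b)) := by
          rw [castH_castH]
        rw [hb, L_mulεt]
        simp only [mu2_tmul, LinearMap.comp_apply, LinearMap.flip_apply]
    | add s t hs ht => simp only [map_add, hs, ht]
  rw [step3, ← mu2_map_right (A.mul p) Sc (A.εt p ∘ₗ (A.mul 1).flip h)
    (castH k H (one_mul (1:G)))]
  have hW2 : (TensorProduct.map LinearMap.id (castH k H (one_mul (1:G))))
      (A.comul p⁻¹ (1 * 1) (A.one (p⁻¹ * (1 * 1)))) = W := by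
    rw [c_comul_right A (one_mul (1:G)) (by rw [one_mul]), c_one, hW]
  rw [hW2]
  -- now: mu2 (mul p) Sc (εt p ∘ flip h) W = εt p h
  set Dh : H p ⊗[k] H p⁻¹ := A.comul p p⁻¹ (castH k H (mul_inv_cancel p).symm h) with hDh
  set Φ₂ : H p⁻¹ ⊗[k] (H p ⊗[k] H p⁻¹) →ₗ[k] H p :=
    (mu2 k (A.mul p) (mu2 k (A.mul p) Sc LinearMap.id) Sc) ∘ₗ
      (TensorProduct.assoc k (H p⁻¹) (H p) (H p⁻¹)).symm.toLinearMap with hΦ₂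
  have inner₂ : ∀ (a : H p⁻¹) (r : H p ⊗[k] H p⁻¹),
      Φ₂ (a ⊗ₜ[k] r) = mu2 k (A.mul p) (A.mul p (Sc a)) Sc r := by
    intro a r
    induction r using TensorProduct.induction_on with
    | zero => simp
    | tmul u v =>
        simp only [hΦ₂, LinearMap.comp_apply, LinearEquiv.coe_coe,
          TensorProduct.assoc_symm_tmul, mu2_tmul, LinearMap.id_apply]
    | add s t hs ht => simp only [TensorProduct.tmul_add, map_add, hs, ht]
  have step5 : ∀ t : H p⁻¹ ⊗[k] H 1,
      mu2 k (A.mul p) Sc (A.εt p ∘ₗ (A.mul 1).flip h) t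
        = Φ₂ ((TensorProduct.map LinearMap.id
            ((pair2 k (A.mul p) (A.mul p⁻¹)).flip Dh ∘ₗ (A.comul p p⁻¹) ∘ₗ
              castH k H (mul_inv_cancel p).symm)) t) := by
    intro t
    induction t using TensorProduct.induction_on with
    | zero => simp
    | tmul a c =>
        simp only [mu2_tmul, LinearMap.comp_apply, LinearMap.flip_apply,
          TensorProduct.map_tmul, LinearMap.id_apply]
        rw [← A.antip₃ p (A.mul 1 c h) (Sc a), ← hSc, c_mul A (mul_inv_cancel p).symm,
          A.comul_mul, inner₂]
    | add s t hs ht => simp only [map_add, hs, ht]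
  rw [step5]
  set V : H (p⁻¹ * p) ⊗[k] H p⁻¹ := A.comul (p⁻¹ * p) p⁻¹ (A.one (p⁻¹ * p * p⁻¹)) with hV
  have hsplit : (TensorProduct.map LinearMap.id
        ((pair2 k (A.mul p) (A.mul p⁻¹)).flip Dh ∘ₗ (A.comul p p⁻¹) ∘ₗ
          castH k H (mul_inv_cancel p).symm)) W
      = (TensorProduct.map LinearMap.id ((pair2 k (A.mul p) (A.mul p⁻¹)).flip Dh))
          ((TensorProduct.assoc k (H p⁻¹) (H p) (H p⁻¹))
            ((TensorProduct.map (A.comul p⁻¹ p) LinearMap.id) V)) := by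
    rw [map_id_comp, map_id_comp, hW,
      c_comul_right A (mul_inv_cancel p).symm (by rw [mul_inv_cancel]), c_one]
    have hco := A.coassoc p⁻¹ p p⁻¹ (A.one (p⁻¹ * p * p⁻¹))
    rw [c_one A (mul_assoc p⁻¹ p p⁻¹)] at hco
    rw [← hco, hV]
  rw [hsplit]
  have step8 : ∀ (d : H p ⊗[k] H p⁻¹) (t : H (p⁻¹ * p) ⊗[k] H p⁻¹),
      Φ₂ ((TensorProduct.map LinearMap.id ((pair2 k (A.mul p) (A.mul p⁻¹)).flip d))
          ((TensorProduct.assoc k (H p⁻¹) (H p) (H p⁻¹))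
            ((TensorProduct.map (A.comul p⁻¹ p) LinearMap.id) t)))
        = (mu2 k (A.mul p) LinearMap.id Sc)
            ((pair2 k (A.mul p) (A.mul p⁻¹)).flip d
              ((TensorProduct.map (A.εs p ∘ₗ castH k H (inv_mul_cancel p))
                LinearMap.id) t)) := by
    intro d t
    induction t using TensorProduct.induction_on with
    | zero => simp
    | tmul n₁ n₂ =>
        induction d using TensorProduct.induction_on with
        | zero =>
            simp only [map_zero, map_zero_right]
            simp
        | tmul u v =>
            have θ : ∀ s : H p⁻¹ ⊗[k] H p,
                Φ₂ ((TensorProduct.map LinearMap.id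
                    ((pair2 k (A.mul p) (A.mul p⁻¹)).flip (u ⊗ₜ[k] v)))
                  ((TensorProduct.assoc k (H p⁻¹) (H p) (H p⁻¹)) (s ⊗ₜ[k] n₂)))
                  = A.mul p (mu2 k (A.mul p) Sc ((A.mul p).flip u) s)
                      (Sc (A.mul p⁻¹ n₂ v)) := by
              intro s
              induction s using TensorProduct.induction_on with
              | zero => simp
              | tmul a b =>
                  simp only [TensorProduct.assoc_tmul, TensorProduct.map_tmul,
                    LinearMap.id_apply, LinearMap.flip_apply, pair2_tmul, inner₂,
                    mu2_tmul]
              | add s t hs ht =>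
                  simp only [TensorProduct.add_tmul, map_add, LinearMap.add_apply, hs, ht]
            simp only [TensorProduct.map_tmul, LinearMap.id_apply, θ]
            have hn : A.comul p⁻¹ p n₁
                = A.comul p⁻¹ p (castH k H (inv_mul_cancel p).symm
                    (castH k H (inv_mul_cancel p) n₁)) := by
              rw [castH_castH]
            rw [hn]
            have ha := A.antip₁ p (castH k H (inv_mul_cancel p) n₁) u
            rw [← hSc] at ha
            rw [ha]
            simp only [LinearMap.flip_apply, pair2_tmul, mu2_tmul, LinearMap.id_apply,
              LinearMap.comp_apply]
        | add d d' hd hd' =>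
            simp only [map_add, LinearMap.add_apply, map_add_right, hd, hd']
    | add s t hs ht => simp only [map_add, LinearMap.add_apply, hs, ht]
  rw [step8]
  have hV2 : (TensorProduct.map (A.εs p ∘ₗ castH k H (inv_mul_cancel p)) LinearMap.id) V
      = A.comul p p⁻¹ (A.one (p * p⁻¹)) := by
    rw [map_comp_id, hV, c_comul_left A (inv_mul_cancel p) (by rw [inv_mul_cancel]),
      c_one, G2G]
  rw [hV2, LinearMap.flip_apply, hDh, ← A.comul_mul p p⁻¹ (A.one (p * p⁻¹)), A.one_mul']
  rw [hSc]
  exact L_A A p h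

end WHQPaper
namespace WHQPaper
set_option linter.unusedSectionVars false
set_option maxHeartbeats 1600000

variable {k : Type*} [Field k]

section generic6
variable {M N P Q C N' : Type*} [AddCommGroup M] [Module k M] [AddCommGroup N] [Module k N]
  [AddCommGroup P] [Module k P] [AddCommGroup Q] [Module k Q] [AddCommGroup C] [Module k C]
  [AddCommGroup N'] [Module k N']

lemma map_zero_left (f : N →ₗ[k] Q) (t : M ⊗[k] N) :
    TensorProduct.map (0 : M →ₗ[k] P) f t = 0 := by
  induction t using TensorProduct.induction_on with
  | zero => simp
  | tmul x y => simp
  | add s t hs ht => simp [map_add, hs, ht]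

lemma map_add_left (f f' : M →ₗ[k] P) (g : N →ₗ[k] Q) (t : M ⊗[k] N) :
    TensorProduct.map (f + f') g t
      = TensorProduct.map f g t + TensorProduct.map f' g t := by
  induction t using TensorProduct.induction_on with
  | zero => simp
  | tmul x y => simp [TensorProduct.add_tmul]
  | add s t hs ht => simp only [map_add, hs, ht]; abel

lemma mu2_map_left (m : P →ₗ[k] Q →ₗ[k] C) (f : M →ₗ[k] P) (g : N →ₗ[k] Q)
    (c : N' →ₗ[k] M) (t : N' ⊗[k] N) :
    mu2 k m f g (TensorProduct.map c LinearMap.id t) = mu2 k m (f ∘ₗ c) g t := by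
  induction t using TensorProduct.induction_on with
  | zero => simp
  | tmul x y => simp
  | add s t hs ht => simp [map_add, hs, ht]

/-- `c ↦ ψ ((id ⊗ m c) s)`. -/
def couple2 (m : C →ₗ[k] N →ₗ[k] N) (ψ : M ⊗[k] N →ₗ[k] k) (s : M ⊗[k] N) : C →ₗ[k] k :=
  ψ ∘ₗ (LinearMap.applyₗ s) ∘ₗ (LinearMap.lTensorHom M) ∘ₗ m

lemma couple2_apply (m : C →ₗ[k] N →ₗ[k] N) (ψ : M ⊗[k] N →ₗ[k] k) (s : M ⊗[k] N) (c : C) :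
    couple2 m ψ s c = ψ (TensorProduct.map LinearMap.id (m c) s) := rfl

lemma couple2_add (m : C →ₗ[k] N →ₗ[k] N) (ψ : M ⊗[k] N →ₗ[k] k) (s t : M ⊗[k] N) :
    couple2 m ψ (s + t) = couple2 m ψ s + couple2 m ψ t := by
  apply LinearMap.ext; intro c
  simp [couple2_apply, map_add]

lemma couple2_zero (m : C →ₗ[k] N →ₗ[k] N) (ψ : M ⊗[k] N →ₗ[k] k) :
    couple2 m ψ (0 : M ⊗[k] N) = 0 := by
  apply LinearMap.ext; intro c
  simp [couple2_apply]

end generic6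

variable {G : Type*} [Group G] {H : G → Type*}
  [∀ p, AddCommGroup (H p)] [∀ p, Module k (H p)] (A : GCWHQ k G H)

/-- `ε(h x₍₁₎) ε_s^p(x₍₂₎) = ε_s^p(h x)` (summed over `Δ(x)`). -/
lemma L_mulεs (p : G) (h x : H 1) :
    sm2 k (A.counit ∘ₗ A.mul 1 h) (A.εs p)
        (A.comul 1 1 (castH k H (one_mul (1:G)).symm x))
      = A.εs p (A.mul 1 h x) := by
  rw [A.εs_def p (A.mul 1 h x)]
  set Ψ : H 1 ⊗[k] H 1 →ₗ[k] k := sc2 k (A.counit ∘ₗ A.mul 1 h) A.counit with hΨ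
  have step1 : ∀ t : H p ⊗[k] H 1,
      sm2 k (A.counit ∘ₗ A.mul 1 (A.mul 1 h x)) LinearMap.id
          ((TensorProduct.comm k (H p) (H 1)) t)
        = sm2 k (couple2 ((A.mul 1).flip) Ψ
            (A.comul 1 1 (castH k H (one_mul (1:G)).symm x))) LinearMap.id
            ((TensorProduct.comm k (H p) (H 1)) t) := by
    intro t
    induction t using TensorProduct.induction_on with
    | zero => simp
    | tmul c d =>
        simp only [TensorProduct.comm_tmul, sm2_tmul, LinearMap.comp_apply]
        congr 1
        rw [A.eps_weak₁ h x d, couple2_apply]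
        have : TensorProduct.map LinearMap.id ((A.mul 1).flip d)
              (A.comul 1 1 (castH k H (one_mul (1:G)).symm x))
            = TensorProduct.map LinearMap.id ((A.mul 1).flip d)
              (A.comul 1 1 (castH k H (one_mul (1:G)).symm x)) := rfl
        rw [hΨ]
        generalize A.comul 1 1 (castH k H (one_mul (1:G)).symm x) = s
        induction s using TensorProduct.induction_on with
        | zero => simp
        | tmul y z => simp
        | add s t hs ht => simp only [map_add, hs, ht]
    | add s t hs ht => simp only [map_add, hs, ht]
  rw [step1]
  have step2 : ∀ s : H 1 ⊗[k] H 1,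
      sm2 k (couple2 ((A.mul 1).flip) Ψ s) LinearMap.id
          ((TensorProduct.comm k (H p) (H 1)) (A.comul p 1 (A.one (p * 1))))
        = sm2 k (A.counit ∘ₗ A.mul 1 h) (A.εs p) s := by
    intro s
    induction s using TensorProduct.induction_on with
    | zero => rw [couple2_zero, sm2_zero_f]; simp
    | tmul a b =>
        rw [sm2_tmul, A.εs_def p b]
        generalize (TensorProduct.comm k (H p) (H 1)) (A.comul p 1 (A.one (p * 1))) = r
        induction r using TensorProduct.induction_on with
        | zero => simp
        | tmul c d =>
            simp only [sm2_tmul, couple2_apply, LinearMap.id_apply, TensorProduct.map_tmul,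
              hΨ, sc2_tmul, LinearMap.comp_apply, LinearMap.flip_apply, smul_smul]
        | add s t hs ht => simp only [map_add, hs, ht, smul_add]
    | add s t hs ht =>
        rw [couple2_add, sm2_add_f, hs, ht]
        simp only [map_add]
  rw [step2]

/-- Goal 4: `ε_s^p = S_{p⁻¹} ∘ ε̃_s^{p⁻¹}`. -/
lemma G4 (p : G) :
    A.εs p = castH k H (inv_inv p) ∘ₗ A.antS p⁻¹ ∘ₗ A.εs' p⁻¹ := by
  ext h
  simp only [LinearMap.comp_apply]
  rw [A.εs'_def]
  symm
  set Sc : H p⁻¹ →ₗ[k] H p := castH k H (inv_inv p) ∘ₗ A.antS p⁻¹ with hSc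
  set W : H 1 ⊗[k] H p⁻¹ := A.comul 1 p⁻¹ (A.one (1 * p⁻¹)) with hW
  have ScEq : ∀ y : H p⁻¹, Sc y
      = mu2 k (A.mul p) (A.εs p) Sc (A.comul 1 p⁻¹ (castH k H (one_mul p⁻¹).symm y)) := by
    intro y
    rw [hSc, LinearMap.comp_apply, ← A.εs_conv_S p⁻¹ y, c_mu2 A (inv_inv p), c_εs_comp]
  rw [sm2_push, sm2_push]
  have hfold : castH k H (inv_inv p) ∘ₗ A.antS p⁻¹ ∘ₗ LinearMap.id = Sc := by
    rw [LinearMap.comp_id, hSc]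
  rw [hfold]
  set Φ₁ : H 1 ⊗[k] (H 1 ⊗[k] H p⁻¹) →ₗ[k] H p :=
    sm2 k (A.counit ∘ₗ A.mul 1 h) (mu2 k (A.mul p) (A.εs p) Sc) with hΦ₁
  have step1 : ∀ t : H 1 ⊗[k] H p⁻¹,
      sm2 k (A.counit ∘ₗ A.mul 1 h) Sc t
        = Φ₁ ((TensorProduct.map LinearMap.id
            ((A.comul 1 p⁻¹) ∘ₗ castH k H (one_mul p⁻¹).symm)) t) := by
    intro t
    induction t using TensorProduct.induction_on with
    | zero => simp
    | tmul a c =>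
        simp only [sm2_tmul, TensorProduct.map_tmul, LinearMap.id_apply,
          LinearMap.comp_apply, hΦ₁]
        rw [ScEq c]
    | add s t hs ht => simp only [map_add, hs, ht]
  rw [step1]
  have hW1 : (TensorProduct.map LinearMap.id
      ((A.comul 1 p⁻¹) ∘ₗ castH k H (one_mul p⁻¹).symm)) W
      = (TensorProduct.assoc k (H 1) (H 1) (H p⁻¹))
          ((TensorProduct.map (A.comul 1 1) LinearMap.id)
            (A.comul (1 * 1) p⁻¹ (A.one (1 * 1 * p⁻¹)))) := by
    rw [map_id_comp, hW,
      c_comul_right A (one_mul p⁻¹).symm (congrArg (fun z => 1 * z) (one_mul p⁻¹).symm),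
      c_one]
    have hco := A.coassoc 1 1 p⁻¹ (A.one (1 * 1 * p⁻¹))
    rw [c_one A (mul_assoc 1 1 p⁻¹)] at hco
    rw [← hco]
  rw [hW1]
  have step3 : ∀ t : H (1 * 1) ⊗[k] H p⁻¹,
      Φ₁ ((TensorProduct.assoc k (H 1) (H 1) (H p⁻¹))
          ((TensorProduct.map (A.comul 1 1) LinearMap.id) t))
        = mu2 k (A.mul p)
            ((A.εs p ∘ₗ A.mul 1 h) ∘ₗ castH k H (one_mul (1:G))) Sc t := by
    intro t
    induction t using TensorProduct.induction_on with
    | zero => simp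
    | tmul a b =>
        have inner : ∀ s : H 1 ⊗[k] H 1,
            Φ₁ ((TensorProduct.assoc k (H 1) (H 1) (H p⁻¹)) (s ⊗ₜ[k] b))
              = A.mul p (sm2 k (A.counit ∘ₗ A.mul 1 h) (A.εs p) s) (Sc b) := by
          intro s
          induction s using TensorProduct.induction_on with
          | zero => simp
          | tmul u v =>
              simp only [TensorProduct.assoc_tmul, hΦ₁, sm2_tmul, mu2_tmul,
                LinearMap.comp_apply, map_smul, LinearMap.smul_apply]
          | add s t hs ht =>
              simp only [TensorProduct.add_tmul, map_add, LinearMap.add_apply, hs, ht]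
        simp only [TensorProduct.map_tmul, LinearMap.id_apply, inner]
        have hb : A.comul 1 1 a
            = A.comul 1 1 (castH k H (one_mul (1:G)).symm (castH k H (one_mul (1:G)) a)) := by
          rw [castH_castH]
        rw [hb, L_mulεs]
        simp only [mu2_tmul, LinearMap.comp_apply]
    | add s t hs ht => simp only [map_add, hs, ht]
  rw [step3, ← mu2_map_left (A.mul p) (A.εs p ∘ₗ A.mul 1 h) Sc (castH k H (one_mul (1:G)))]
  have hW2 : (TensorProduct.map (castH k H (one_mul (1:G))) LinearMap.id)
      (A.comul (1 * 1) p⁻¹ (A.one (1 * 1 * p⁻¹))) = W := by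
    rw [c_comul_left A (one_mul (1:G)) (congrArg (fun z => z * p⁻¹) (one_mul (1:G))),
      c_one, hW]
  rw [hW2]
  -- now: mu2 (mul p) (εs p ∘ mul h) Sc W = εs p h
  set Dh : H p⁻¹ ⊗[k] H p := A.comul p⁻¹ p (castH k H (inv_mul_cancel p).symm h) with hDh
  set Φ₂ : (H p⁻¹ ⊗[k] H p) ⊗[k] H p⁻¹ →ₗ[k] H p :=
    (mu2 k (A.mul p) Sc (mu2 k (A.mul p) LinearMap.id Sc)) ∘ₗ
      (TensorProduct.assoc k (H p⁻¹) (H p) (H p⁻¹)).toLinearMap with hΦ₂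
  have inner₂ : ∀ (c : H p⁻¹) (r : H p⁻¹ ⊗[k] H p),
      Φ₂ (r ⊗ₜ[k] c) = mu2 k (A.mul p) Sc ((A.mul p).flip (Sc c)) r := by
    intro c r
    induction r using TensorProduct.induction_on with
    | zero => simp
    | tmul u v =>
        simp only [hΦ₂, LinearMap.comp_apply, LinearEquiv.coe_coe,
          TensorProduct.assoc_tmul, mu2_tmul, LinearMap.id_apply, LinearMap.flip_apply]
    | add s t hs ht =>
        simp only [TensorProduct.add_tmul, map_add, LinearMap.add_apply, hs, ht]
  have step5 : ∀ t : H 1 ⊗[k] H p⁻¹,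
      mu2 k (A.mul p) (A.εs p ∘ₗ A.mul 1 h) Sc t
        = Φ₂ ((TensorProduct.map
            (pair2 k (A.mul p⁻¹) (A.mul p) Dh ∘ₗ (A.comul p⁻¹ p) ∘ₗ
              castH k H (inv_mul_cancel p).symm) LinearMap.id) t) := by
    intro t
    induction t using TensorProduct.induction_on with
    | zero => simp
    | tmul c c' =>
        simp only [mu2_tmul, LinearMap.comp_apply, TensorProduct.map_tmul,
          LinearMap.id_apply]
        rw [← A.antip₁ p (A.mul 1 h c) (Sc c'), ← hSc, c_mul A (inv_mul_cancel p).symm,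
          A.comul_mul, inner₂]
    | add s t hs ht => simp only [map_add, hs, ht]
  rw [step5]
  set V : H (p⁻¹ * p) ⊗[k] H p⁻¹ := A.comul (p⁻¹ * p) p⁻¹ (A.one (p⁻¹ * p * p⁻¹)) with hV
  have hsplit : (TensorProduct.map
        (pair2 k (A.mul p⁻¹) (A.mul p) Dh ∘ₗ (A.comul p⁻¹ p) ∘ₗ
          castH k H (inv_mul_cancel p).symm) LinearMap.id) W
      = (TensorProduct.map (pair2 k (A.mul p⁻¹) (A.mul p) Dh) LinearMap.id)
          ((TensorProduct.assoc k (H p⁻¹) (H p) (H p⁻¹)).symm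
            ((TensorProduct.map LinearMap.id (A.comul p p⁻¹))
              (A.comul p⁻¹ (p * p⁻¹) (A.one (p⁻¹ * (p * p⁻¹)))))) := by
    rw [map_comp_id, map_comp_id, hW,
      c_comul_left A (inv_mul_cancel p).symm (by rw [inv_mul_cancel]), c_one]
    have hco := A.coassoc p⁻¹ p p⁻¹ (A.one (p⁻¹ * p * p⁻¹))
    rw [c_one A (mul_assoc p⁻¹ p p⁻¹)] at hco
    rw [← hco, LinearEquiv.symm_apply_apply]
  rw [hsplit]
  have step8 : ∀ (d : H p⁻¹ ⊗[k] H p) (t : H p⁻¹ ⊗[k] H (p * p⁻¹)),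
      Φ₂ ((TensorProduct.map (pair2 k (A.mul p⁻¹) (A.mul p) d) LinearMap.id)
          ((TensorProduct.assoc k (H p⁻¹) (H p) (H p⁻¹)).symm
            ((TensorProduct.map LinearMap.id (A.comul p p⁻¹)) t)))
        = (mu2 k (A.mul p) Sc LinearMap.id)
            (pair2 k (A.mul p⁻¹) (A.mul p) d
              ((TensorProduct.map LinearMap.id
                (A.εt p ∘ₗ castH k H (mul_inv_cancel p))) t)) := by
    intro d t
    induction t using TensorProduct.induction_on with
    | zero => simp
    | tmul n₁ n₂ =>
        induction d using TensorProduct.induction_on with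
        | zero =>
            simp only [map_zero, map_zero_left, LinearMap.map_zero]
            simp
        | tmul d₁ d₂ =>
            have θ : ∀ s : H p ⊗[k] H p⁻¹,
                Φ₂ ((TensorProduct.map (pair2 k (A.mul p⁻¹) (A.mul p) (d₁ ⊗ₜ[k] d₂))
                    LinearMap.id)
                  ((TensorProduct.assoc k (H p⁻¹) (H p) (H p⁻¹)).symm (n₁ ⊗ₜ[k] s)))
                  = A.mul p (Sc (A.mul p⁻¹ d₁ n₁))
                      (mu2 k (A.mul p) (A.mul p d₂) Sc s) := by
              intro s
              induction s using TensorProduct.induction_on with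
              | zero => simp
              | tmul y z =>
                  simp only [TensorProduct.assoc_symm_tmul, TensorProduct.map_tmul,
                    LinearMap.id_apply, pair2_tmul, hΦ₂, LinearMap.comp_apply,
                    LinearEquiv.coe_coe, TensorProduct.assoc_tmul, mu2_tmul]
              | add s t hs ht =>
                  simp only [TensorProduct.tmul_add, map_add, LinearMap.add_apply, hs, ht]
            simp only [TensorProduct.map_tmul, LinearMap.id_apply, θ]
            have hn : A.comul p p⁻¹ n₂
                = A.comul p p⁻¹ (castH k H (mul_inv_cancel p).symm
                    (castH k H (mul_inv_cancel p) n₂)) := by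
              rw [castH_castH]
            rw [hn]
            have ha := A.antip₃ p (castH k H (mul_inv_cancel p) n₂) d₂
            rw [← hSc] at ha
            rw [ha]
            simp only [pair2_tmul, mu2_tmul, LinearMap.id_apply, LinearMap.comp_apply]
        | add d d' hd hd' =>
            simp only [map_add, LinearMap.add_apply, map_add_left, hd, hd']
    | add s t hs ht => simp only [map_add, LinearMap.add_apply, hs, ht]
  rw [step8]
  have hV2 : (TensorProduct.map LinearMap.id (A.εt p ∘ₗ castH k H (mul_inv_cancel p)))
      (A.comul p⁻¹ (p * p⁻¹) (A.one (p⁻¹ * (p * p⁻¹))))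
      = A.comul p⁻¹ p (A.one (p⁻¹ * p)) := by
    rw [map_id_comp, c_comul_right A (mul_inv_cancel p) (by rw [mul_inv_cancel]),
      c_one, G4G]
  rw [hV2, hDh, ← A.comul_mul p⁻¹ p, A.mul_one']
  rw [hSc]
  exact L_B A p h

end WHQPaper
open WHQPaper in
/-- In a group-cograded weak Hopf quasigroup, for all `p ∈ G` one has
`ε^t_p = ε̃^s_p ∘ S_e = S_{p⁻¹} ∘ ε̃^t_{p⁻¹}` and
`ε^s_p = ε̃^t_p ∘ S_e = S_{p⁻¹} ∘ ε̃^s_{p⁻¹}` as maps `H_e → H_p`. -/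
theorem counital_maps_antipode {k G : Type*} [Field k] [Group G] {H : G → Type*}
    [∀ p, AddCommGroup (H p)] [∀ p, Module k (H p)] (A : GCWHQ k G H) (p : G) :
    (A.εt p = A.εs' p ∘ₗ castH k H inv_one ∘ₗ A.antS 1 ∧
     A.εt p = castH k H (inv_inv p) ∘ₗ A.antS p⁻¹ ∘ₗ A.εt' p⁻¹) ∧
    (A.εs p = A.εt' p ∘ₗ castH k H inv_one ∘ₗ A.antS 1 ∧
     A.εs p = castH k H (inv_inv p) ∘ₗ A.antS p⁻¹ ∘ₗ A.εs' p⁻¹) := by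
  exact ⟨⟨WHQPaper.G1 A p, WHQPaper.G2 A p⟩, ⟨WHQPaper.G3 A p, WHQPaper.G4 A p⟩⟩
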